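/- Fix s>1, a bounded open set U ⊆ ℝ^d, h>0, α∈ℕ^d and 1≤p≤∞, with q the conjugate exponent. The set G_α = {D^αδ_x : x∈U} of continuous linear functionals φ ↦ (−1)^{|α|}D^αφ(x) on D^{(s)}_{L^q,h}(U) is precompact (totally bounded) in the dual Banach space D'^{(s)}_{L^p,h}(U) with its operator norm. -/

import Mathlib

open MeasureTheory Filter Set
open scoped BigOperators ENNReal NNReal Topology

noncomputable section

/-- The order `|α|` of a multi-index `α`. -/
def mOrder {d : ℕ} (α : Fin d → ℕ) : ℕ := ∑ i, α i

/-- The factorial `α!` of a multi-index `α`. -/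
def mFact {d : ℕ} (α : Fin d → ℕ) : ℕ := ∏ i, Nat.factorial (α i)

variable {d : ℕ} {F : Type*} [NormedAddCommGroup F] [NormedSpace ℝ F]

/-- First-order partial derivative `∂_i`. -/
def pd (i : Fin d) (f : (Fin d → ℝ) → F) : (Fin d → ℝ) → F :=
  fun x => fderiv ℝ f x (Pi.single i 1)

/-- Iterated partial derivative `∂_i^n`. -/
def pdPow (i : Fin d) : ℕ → ((Fin d → ℝ) → F) → ((Fin d → ℝ) → F)
  | 0 => id
  | n + 1 => fun f => pd i (pdPow i n f)

/-- Iterated partial derivative `∂^α` for a multi-index `α`. -/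
def pdm (α : Fin d → ℕ) (f : (Fin d → ℝ) → F) : (Fin d → ℝ) → F :=
  (List.finRange d).foldr (fun i g => pdPow i (α i) g) f

/-- The operator `D^α = i^{-|α|} ∂^α` for complex-valued functions. -/
def Dm (α : Fin d → ℕ) (f : (Fin d → ℝ) → ℂ) : (Fin d → ℝ) → ℂ :=
  fun x => (-Complex.I) ^ (mOrder α) * pdm α f x

/-- `φ` is a Beurling–Gevrey test function of class `(s)` on `U`. -/
def IsGevreyTest (s : ℝ) (U : Set (Fin d → ℝ)) (φ : (Fin d → ℝ) → F) : Prop :=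
  ContDiff ℝ (⊤ : ℕ∞) φ ∧ HasCompactSupport φ ∧ tsupport φ ⊆ U ∧
    ∀ h : ℝ, 0 < h → ∃ C : ℝ, ∀ (α : Fin d → ℕ) (x : Fin d → ℝ),
      ‖pdm α φ x‖ ≤ C * h ^ (mOrder α) * (mFact α : ℝ) ^ s

/-- The `ℓ^p`-type norm of a family of extended reals (sup for `p = ∞`). -/
def seqLpNorm {ι : Type*} (p : ℝ≥0∞) (w : ι → ℝ≥0∞) : ℝ≥0∞ :=
  if p = ∞ then ⨆ i, w i else (∑' i, (w i) ^ p.toReal) ^ (1 / p.toReal)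

/-- The norm of the space `D^s_{L^p,h}(U)`:
`(∑_α h^{p|α|} ‖D^α φ‖_{L^p(U)}^p / α!^{ps})^{1/p}` (sup over `α` when `p = ∞`). -/
def gNorm (s h : ℝ) (p : ℝ≥0∞) (U : Set (Fin d → ℝ)) (φ : (Fin d → ℝ) → F) : ℝ≥0∞ :=
  seqLpNorm p (fun α : Fin d → ℕ =>
    ENNReal.ofReal (h ^ (mOrder α) / (mFact α : ℝ) ^ s) *
      eLpNorm (pdm α φ) p (volume.restrict U))

/-- Membership in `D^{(s)}_{L^p,h}(U)`, the closure of `D^{(s)}(U)` in `D^s_{L^p,h}(U)`. -/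
def MemD (s h : ℝ) (p : ℝ≥0∞) (U : Set (Fin d → ℝ)) (φ : (Fin d → ℝ) → F) : Prop :=
  ContDiffOn ℝ (⊤ : ℕ∞) φ U ∧ gNorm s h p U φ < ⊤ ∧
    ∀ ε : ℝ, 0 < ε → ∃ ψ : (Fin d → ℝ) → F, IsGevreyTest s U ψ ∧
      gNorm s h p U (φ - ψ) < ENNReal.ofReal ε

/-- Membership in `Ḃ^{(s)}(U)`, the closure of `D^{(s)}(U)` with respect to the
family of norms `p_h`, `h > 0` (the norms being directed, closure with respect to the
whole family amounts to approximability in each norm separately). -/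
def MemBdot (s : ℝ) (U : Set (Fin d → ℝ)) (φ : (Fin d → ℝ) → F) : Prop :=
  ContDiffOn ℝ (⊤ : ℕ∞) φ U ∧ (∀ h : ℝ, 0 < h → gNorm s h ∞ U φ < ⊤) ∧
    ∀ h ε : ℝ, 0 < h → 0 < ε → ∃ ψ : (Fin d → ℝ) → F, IsGevreyTest s U ψ ∧
      gNorm s h ∞ U (φ - ψ) < ENNReal.ofReal ε

/-- A continuous linear functional on the Banach space `D^{(s)}_{L^q,h}(U)`. -/
def IsDualD (s h : ℝ) (q : ℝ≥0∞) (U : Set (Fin d → ℝ)) (T : ((Fin d → ℝ) → ℂ) → ℂ) : Prop :=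
  (∀ φ ψ, MemD s h q U φ → MemD s h q U ψ → T (φ + ψ) = T φ + T ψ) ∧
  (∀ (c : ℂ) (φ), MemD s h q U φ → T (c • φ) = c * T φ) ∧
  ∃ M : ℝ, ∀ φ, MemD s h q U φ → ‖T φ‖ ≤ M * (gNorm s h q U φ).toReal

/-- A continuous linear map from `Ḃ^{(s)}(U)` into a Banach space `E` (over `ℂ`). -/
def IsContLinBdot (s : ℝ) (U : Set (Fin d → ℝ)) {E : Type*} [NormedAddCommGroup E]
    [NormedSpace ℂ E] (f : ((Fin d → ℝ) → ℂ) → E) : Prop :=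
  (∀ φ ψ, MemBdot s U φ → MemBdot s U ψ → f (φ + ψ) = f φ + f ψ) ∧
  (∀ (c : ℂ) (φ), MemBdot s U φ → f (c • φ) = c • f φ) ∧
  ∃ h M : ℝ, 0 < h ∧ ∀ φ, MemBdot s U φ → ‖f φ‖ ≤ M * (gNorm s h ∞ U φ).toReal


section Aux
variable {d : ℕ} {F : Type*} [NormedAddCommGroup F] [NormedSpace ℝ F]
set_option linter.unusedSectionVars false
theorem pd_contDiff {f : (Fin d → ℝ) → F} (hf : ContDiff ℝ (⊤:ℕ∞) f) (i : Fin d) :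
    ContDiff ℝ (⊤:ℕ∞) (pd i f) := by
  have h1 : ContDiff ℝ (⊤:ℕ∞) (fderiv ℝ f) := hf.fderiv_right (by simp)
  exact (ContinuousLinearMap.apply ℝ F (Pi.single i 1)).contDiff.comp h1

theorem pd_contDiffOn {f : (Fin d → ℝ) → F} {U : Set (Fin d → ℝ)} (hU : IsOpen U)
    (hf : ContDiffOn ℝ (⊤:ℕ∞) f U) (i : Fin d) : ContDiffOn ℝ (⊤:ℕ∞) (pd i f) U := by
  have h1 : ContDiffOn ℝ (⊤:ℕ∞) (fderiv ℝ f) U := hf.fderiv_of_isOpen hU (by simp)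
  exact (ContinuousLinearMap.apply ℝ F (Pi.single i 1)).contDiff.comp_contDiffOn h1

theorem pd_sub {f g : (Fin d → ℝ) → F} {U : Set (Fin d → ℝ)} (hU : IsOpen U)
    (hf : ContDiffOn ℝ (⊤:ℕ∞) f U) (hg : ContDiffOn ℝ (⊤:ℕ∞) g U) (i : Fin d)
    {x : Fin d → ℝ} (hx : x ∈ U) : pd i (f - g) x = pd i f x - pd i g x := by
  have hfd : DifferentiableAt ℝ f x :=
    (hf.differentiableOn (by simp)).differentiableAt (hU.mem_nhds hx)
  have hgd : DifferentiableAt ℝ g x :=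
    (hg.differentiableOn (by simp)).differentiableAt (hU.mem_nhds hx)
  have : fderiv ℝ (f - g) x = fderiv ℝ f x - fderiv ℝ g x := by
    have := fderiv_sub hfd hgd
    simpa using this
  simp [pd, this]

-- Schwarz
theorem pd_comm {f : (Fin d → ℝ) → F} (hf : ContDiff ℝ (⊤:ℕ∞) f) (i j : Fin d) :
    pd i (pd j f) = pd j (pd i f) := by
  funext x
  have hder : ∀ y, HasFDerivAt f (fderiv ℝ f y) y := fun y =>
    (hf.differentiable (by simp)).differentiableAt.hasFDerivAt
  have h2 : ContDiff ℝ (⊤:ℕ∞) (fderiv ℝ f) := hf.fderiv_right (by simp)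
  have hx : HasFDerivAt (fderiv ℝ f) (fderiv ℝ (fderiv ℝ f) x) x :=
    (h2.differentiable (by simp)).differentiableAt.hasFDerivAt
  have hsymm := second_derivative_symmetric_of_eventually_of_real
    (Filter.Eventually.of_forall hder) hx (Pi.single i 1) (Pi.single j 1)
  have key : ∀ (k l : Fin d), pd k (pd l f) x = fderiv ℝ (fderiv ℝ f) x (Pi.single k 1) (Pi.single l 1) := by
    intro k l
    have e1 : pd l f = fun y => (ContinuousLinearMap.apply ℝ F (Pi.single l (1:ℝ))) (fderiv ℝ f y) := rfl
    have e2 : fderiv ℝ (pd l f) x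
        = (ContinuousLinearMap.apply ℝ F (Pi.single l (1:ℝ))).comp (fderiv ℝ (fderiv ℝ f) x) := by
      rw [e1]
      rw [show (fun y => (ContinuousLinearMap.apply ℝ F (Pi.single l (1:ℝ))) (fderiv ℝ f y))
          = (ContinuousLinearMap.apply ℝ F (Pi.single l (1:ℝ))) ∘ (fderiv ℝ f) from rfl]
      rw [fderiv_comp x (ContinuousLinearMap.apply ℝ F (Pi.single l (1:ℝ))).differentiableAt
        (h2.differentiable (by simp)).differentiableAt]
      simp
    show fderiv ℝ (pd l f) x (Pi.single k 1) = _
    rw [e2]; rfl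
  rw [key i j, key j i, hsymm]

def pdl (δ : Fin d → ℕ) (l : List (Fin d)) (f : (Fin d → ℝ) → F) : (Fin d → ℝ) → F :=
  l.foldr (fun i g => pdPow i (δ i) g) f

theorem pdm_eq_pdl (δ : Fin d → ℕ) (f : (Fin d → ℝ) → F) : pdm δ f = pdl δ (List.finRange d) f := rfl


theorem pdPow_contDiff {f : (Fin d → ℝ) → F} (hf : ContDiff ℝ (⊤:ℕ∞) f) (i : Fin d) (n : ℕ) :
    ContDiff ℝ (⊤:ℕ∞) (pdPow i n f) := by
  induction n with
  | zero => exact hf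
  | succ n ih => exact pd_contDiff ih i

theorem pdl_contDiff {f : (Fin d → ℝ) → F} (hf : ContDiff ℝ (⊤:ℕ∞) f) (δ : Fin d → ℕ)
    (l : List (Fin d)) : ContDiff ℝ (⊤:ℕ∞) (pdl δ l f) := by
  induction l with
  | nil => exact hf
  | cons j t ih => exact pdPow_contDiff ih j (δ j)

theorem pdm_contDiff {f : (Fin d → ℝ) → F} (hf : ContDiff ℝ (⊤:ℕ∞) f) (δ : Fin d → ℕ) :
    ContDiff ℝ (⊤:ℕ∞) (pdm δ f) := pdl_contDiff hf δ _

theorem pd_pdPow_comm {f : (Fin d → ℝ) → F} (hf : ContDiff ℝ (⊤:ℕ∞) f) (i j : Fin d) (n : ℕ) :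
    pd i (pdPow j n f) = pdPow j n (pd i f) := by
  induction n with
  | zero => rfl
  | succ n ih =>
    show pd i (pd j (pdPow j n f)) = pd j (pdPow j n (pd i f))
    rw [pd_comm (pdPow_contDiff hf j n) i j, ih]

theorem pd_pdl_comm {f : (Fin d → ℝ) → F} (hf : ContDiff ℝ (⊤:ℕ∞) f) (i : Fin d)
    (δ : Fin d → ℕ) (l : List (Fin d)) : pd i (pdl δ l f) = pdl δ l (pd i f) := by
  induction l with
  | nil => rfl
  | cons j t ih =>
    show pd i (pdPow j (δ j) (pdl δ t f)) = pdPow j (δ j) (pdl δ t (pd i f))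
    rw [pd_pdPow_comm (pdl_contDiff hf δ t) i j, ih]

theorem pdl_congr {f : (Fin d → ℝ) → F} {δ δ' : Fin d → ℕ} {l : List (Fin d)}
    (h : ∀ j ∈ l, δ j = δ' j) : pdl δ l f = pdl δ' l f := by
  induction l with
  | nil => rfl
  | cons j t ih =>
    show pdPow j (δ j) (pdl δ t f) = pdPow j (δ' j) (pdl δ' t f)
    rw [h j (by simp), ih (fun k hk => h k (by simp [hk]))]

theorem pd_pdm {f : (Fin d → ℝ) → F} (hf : ContDiff ℝ (⊤:ℕ∞) f) (δ : Fin d → ℕ) (i : Fin d) :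
    pdm (δ + Pi.single i 1) f = pd i (pdm δ f) := by
  rw [pdm_eq_pdl, pdm_eq_pdl]
  have key : ∀ l : List (Fin d), l.Nodup → i ∈ l →
      pdl (δ + Pi.single i 1) l f = pd i (pdl δ l f) := by
    intro l
    induction l with
    | nil => intro _ h; simp at h
    | cons j t ih =>
      intro hnd hmem
      rcases List.nodup_cons.1 hnd with ⟨hjt, hndt⟩
      have unfold1 : pdl (δ + Pi.single i 1) (j :: t) f
          = pdPow j ((δ + Pi.single i 1 : Fin d → ℕ) j) (pdl (δ + Pi.single i 1) t f) := rfl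
      have unfold2 : pdl δ (j :: t) f = pdPow j (δ j) (pdl δ t f) := rfl
      by_cases hji : j = i
      · have hit : i ∉ t := hji ▸ hjt
        have e0 : pdl (δ + Pi.single i 1) t f = pdl δ t f :=
          pdl_congr (fun k hk => by
            have hk' : k ≠ i := fun h => hit (h ▸ hk)
            simp [Pi.single_apply, hk'])
        rw [unfold1, unfold2, e0, hji]
        have e1 : (δ + Pi.single i 1 : Fin d → ℕ) i = δ i + 1 := by simp
        rw [e1]
        rfl
      · have hit : i ∈ t := by
          rcases List.mem_cons.1 hmem with h | h
          · exact absurd h.symm hji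
          · exact h
        rw [unfold1, unfold2]
        have e1 : (δ + Pi.single i 1 : Fin d → ℕ) j = δ j := by
          simp [Pi.single_apply, Ne.symm hji]
        rw [e1, ih hndt hit, ← pd_pdPow_comm (pdl_contDiff hf δ t) i j]
  exact key _ (List.nodup_finRange d) (List.mem_finRange i)

def sSing : List (Fin d) → (Fin d → ℕ)
  | [] => 0
  | i :: t => Pi.single i 1 + sSing t

theorem pdl_one_pdm {f : (Fin d → ℝ) → F} (hf : ContDiff ℝ (⊤:ℕ∞) f) (δ : Fin d → ℕ)
    (l : List (Fin d)) : pdl (fun _ => 1) l (pdm δ f) = pdm (δ + sSing l) f := by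
  induction l with
  | nil =>
    have : sSing ([] : List (Fin d)) = 0 := rfl
    rw [this, add_zero]
    rfl
  | cons i t ih =>
    have unfold1 : pdl (fun _ => (1:ℕ)) (i :: t) (pdm δ f)
        = pdPow i 1 (pdl (fun _ => 1) t (pdm δ f)) := rfl
    have e2 : pdPow i 1 (pdl (fun _ => (1:ℕ)) t (pdm δ f)) = pd i (pdl (fun _ => 1) t (pdm δ f)) := rfl
    rw [unfold1, e2, ih, ← pd_pdm hf]
    have e3 : δ + sSing t + Pi.single i 1 = δ + sSing (i :: t) := by
      have : sSing (i :: t) = Pi.single i 1 + sSing t := rfl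
      rw [this]
      abel
    rw [e3]

theorem sSing_finRange : sSing (List.finRange d) = fun _ => 1 := by
  have key : ∀ (l : List (Fin d)) (j : Fin d), sSing l j = l.count j := by
    intro l
    induction l with
    | nil => intro j; simp [sSing]
    | cons i t ih =>
      intro j
      have : sSing (i :: t) j = (Pi.single i 1 + sSing t : Fin d → ℕ) j := rfl
      rw [this, List.count_cons, Pi.add_apply, Pi.single_apply, ih j]
      by_cases h : j = i
      · subst h; simp [add_comm]
      · have h' : ¬(i == j) = true := by simpa using Ne.symm h
        simp [h, h']
  funext j
  rw [key]
  exact List.count_eq_one_of_mem (List.nodup_finRange d) (List.mem_finRange j)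

theorem pdm_one_pdm {f : (Fin d → ℝ) → F} (hf : ContDiff ℝ (⊤:ℕ∞) f) (δ : Fin d → ℕ) :
    pdm (fun _ => 1) (pdm δ f) = pdm (δ + fun _ => 1) f := by
  have h1 : pdm (fun _ => (1:ℕ)) (pdm δ f) = pdl (fun _ => 1) (List.finRange d) (pdm δ f) := rfl
  rw [h1, pdl_one_pdm hf, sSing_finRange]

theorem tsupport_pd (i : Fin d) (f : (Fin d → ℝ) → F) : tsupport (pd i f) ⊆ tsupport f := by
  have h1 : Function.support (pd i f) ⊆ tsupport f := by
    intro x hx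
    have : fderiv ℝ f x ≠ 0 := by
      intro h0; exact hx (by simp [pd, h0])
    exact support_fderiv_subset ℝ this
  exact closure_minimal h1 (isClosed_closure)

theorem hasCompactSupport_pd (i : Fin d) {f : (Fin d → ℝ) → F} (hf : HasCompactSupport f) :
    HasCompactSupport (pd i f) :=
  IsCompact.of_isClosed_subset hf (isClosed_closure) (tsupport_pd i f)

-- 1D FTC
theorem ftc1 {g g' : ℝ → ℂ} (hd : ∀ τ, HasDerivAt g (g' τ) τ) (hc : Continuous g')
    (hsupp : HasCompactSupport g) (t : ℝ) : (‖g t‖₊ : ℝ≥0∞) ≤ ∫⁻ τ, ‖g' τ‖₊ := by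
  obtain ⟨R, hR⟩ := hsupp.isBounded.subset_closedBall 0
  by_cases ht : t < -R - 1
  · have hgt : g t = 0 := by
      have : t ∉ tsupport g := by
        intro hmem
        have := hR hmem
        simp [Real.closedBall_eq_Icc] at this
        linarith [this.1]
      exact image_eq_zero_of_notMem_tsupport this
    simp [hgt]
  · push_neg at ht
    set a := -R - 1 with ha
    have hat : a ≤ t := ht
    have hga : g a = 0 := by
      have : a ∉ tsupport g := by
        intro hmem
        have := hR hmem
        simp [Real.closedBall_eq_Icc, ha] at this
        linarith [this.1]
      exact image_eq_zero_of_notMem_tsupport this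
    have hderiv : deriv g = g' := funext fun τ => (hd τ).deriv
    have hint : ∫ y in a..t, g' y = g t - g a := by
      rw [← hderiv]
      exact intervalIntegral.integral_deriv_eq_sub (fun x _ => (hd x).differentiableAt)
        (by rw [hderiv]; exact hc.intervalIntegrable a t)
    have h1 : ‖g t‖ ≤ ∫ y in a..t, ‖g' y‖ := by
      rw [hga, sub_zero] at hint
      rw [← hint]
      exact intervalIntegral.norm_integral_le_integral_norm hat
    have h2 : (∫ y in a..t, ‖g' y‖) = ∫ y in Ioc a t, ‖g' y‖ :=
      intervalIntegral.integral_of_le hat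
    have hci : IntegrableOn (fun y => ‖g' y‖) (Ioc a t) volume :=
      (hc.norm).integrableOn_Ioc
    have h3 : ENNReal.ofReal (∫ y in Ioc a t, ‖g' y‖) = ∫⁻ y in Ioc a t, ENNReal.ofReal ‖g' y‖ :=
      ofReal_integral_eq_lintegral_ofReal hci (Filter.Eventually.of_forall fun y => norm_nonneg _)
    calc (‖g t‖₊ : ℝ≥0∞) = ENNReal.ofReal ‖g t‖ := (ofReal_norm _).symm
      _ ≤ ENNReal.ofReal (∫ y in Ioc a t, ‖g' y‖) := by
          apply ENNReal.ofReal_le_ofReal; rw [← h2]; exact h1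
      _ = ∫⁻ y in Ioc a t, ENNReal.ofReal ‖g' y‖ := h3
      _ ≤ ∫⁻ y, ENNReal.ofReal ‖g' y‖ := setLIntegral_le_lintegral _ _
      _ = ∫⁻ y, ‖g' y‖₊ := by
          congr 1; funext y; exact ofReal_norm _

/-- The continuous linear map `v ↦ Fin.cons 0 v`. -/
def consCLM (n : ℕ) : ((Fin n → ℝ) →L[ℝ] (Fin (n+1) → ℝ)) :=
  ContinuousLinearMap.pi (fun j => Fin.cases 0 (fun k => ContinuousLinearMap.proj k) j)

theorem consCLM_apply (v : Fin n → ℝ) : consCLM n v = Fin.cons 0 v := by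
  funext j
  refine Fin.cases ?_ (fun k => ?_) j
  · simp [consCLM]
  · simp [consCLM]

theorem consAffine (t : ℝ) : (fun y : Fin n → ℝ => Fin.cons t y) =
    (fun y => Fin.cons t (0 : Fin n → ℝ) + consCLM n y) := by
  funext y j
  rw [consCLM_apply]
  refine Fin.cases ?_ (fun k => ?_) j <;> simp

theorem hasFDerivAt_cons (t : ℝ) (y : Fin n → ℝ) :
    HasFDerivAt (fun y : Fin n → ℝ => (Fin.cons t y : Fin (n+1) → ℝ)) (consCLM n) y := by
  rw [consAffine]
  exact ((consCLM n).hasFDerivAt).const_add _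

theorem contDiff_cons (t : ℝ) : ContDiff ℝ (⊤:ℕ∞) (fun y : Fin n → ℝ => (Fin.cons t y : Fin (n+1) → ℝ)) := by
  rw [consAffine]
  exact contDiff_const.add (consCLM n).contDiff

theorem slice_contDiff {ρ : (Fin (n+1) → ℝ) → F} (hρ : ContDiff ℝ (⊤:ℕ∞) ρ) (t : ℝ) :
    ContDiff ℝ (⊤:ℕ∞) (fun y : Fin n → ℝ => ρ (Fin.cons t y)) :=
  hρ.comp (contDiff_cons t)

theorem pd_slice {ρ : (Fin (n+1) → ℝ) → F} (hρ : ContDiff ℝ (⊤:ℕ∞) ρ) (t : ℝ) (j : Fin n) :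
    pd j (fun y : Fin n → ℝ => ρ (Fin.cons t y)) =
      (fun y => pd (Fin.succ j) ρ (Fin.cons t y)) := by
  funext y
  have h1 : HasFDerivAt (fun y : Fin n → ℝ => ρ (Fin.cons t y))
      ((fderiv ℝ ρ (Fin.cons t y)).comp (consCLM n)) y :=
    ((hρ.differentiable (by simp)).differentiableAt.hasFDerivAt).comp y (hasFDerivAt_cons t y)
  have h2 : fderiv ℝ (fun y : Fin n → ℝ => ρ (Fin.cons t y)) y
      = (fderiv ℝ ρ (Fin.cons t y)).comp (consCLM n) := h1.fderiv
  show fderiv ℝ _ y (Pi.single j 1) = _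
  rw [h2]
  have h3 : consCLM n (Pi.single j 1) = Pi.single (Fin.succ j) 1 := by
    rw [consCLM_apply]
    funext k
    refine Fin.cases ?_ (fun m => ?_) k
    · simp [Pi.single_apply, Ne.symm (Fin.succ_ne_zero j)]
    · simp [Pi.single_apply, Fin.succ_inj]
  simp only [ContinuousLinearMap.comp_apply, h3]
  rfl

theorem hasDerivAt_line {ρ : (Fin (n+1) → ℝ) → F} (hρ : ContDiff ℝ (⊤:ℕ∞) ρ)
    (z : Fin n → ℝ) (τ : ℝ) :
    HasDerivAt (fun τ : ℝ => ρ (Fin.cons τ z)) (pd 0 ρ (Fin.cons τ z)) τ := by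
  have key : (fun τ : ℝ => (Fin.cons τ z : Fin (n+1) → ℝ))
      = (fun τ : ℝ => (Fin.cons 0 z : Fin (n+1) → ℝ) + τ • (Pi.single 0 1 : Fin (n+1) → ℝ)) := by
    funext τ j
    refine Fin.cases ?_ (fun k => ?_) j <;>
      simp [Pi.single_apply, Fin.succ_ne_zero]
  have h1 : HasDerivAt (fun τ : ℝ => (Fin.cons τ z : Fin (n+1) → ℝ)) (Pi.single 0 1) τ := by
    rw [key]
    simpa using ((hasDerivAt_id τ).smul_const ((Pi.single 0 1 : Fin (n+1) → ℝ))).const_add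
      (Fin.cons 0 z : Fin (n+1) → ℝ)
  have h2 := ((hρ.differentiable (by simp)).differentiableAt.hasFDerivAt).comp_hasDerivAt τ h1
  exact h2

def pdL {d : ℕ} {F : Type*} [NormedAddCommGroup F] [NormedSpace ℝ F] (l : List (Fin d)) (f : (Fin d → ℝ) → F) : (Fin d → ℝ) → F :=
  l.foldr (fun i g => pd i g) f


variable {d n : ℕ} {F : Type*} [NormedAddCommGroup F] [NormedSpace ℝ F]

theorem pdL_contDiff {f : (Fin d → ℝ) → F} (hf : ContDiff ℝ (⊤:ℕ∞) f) (l : List (Fin d)) :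
    ContDiff ℝ (⊤:ℕ∞) (pdL l f) := by
  induction l with
  | nil => exact hf
  | cons j t ih => exact pd_contDiff ih j

theorem hasCompactSupport_pdL {f : (Fin d → ℝ) → F} (hf : HasCompactSupport f) (l : List (Fin d)) :
    HasCompactSupport (pdL l f) := by
  induction l with
  | nil => exact hf
  | cons j t ih => exact hasCompactSupport_pd j ih

theorem tsupport_pdL (l : List (Fin d)) (f : (Fin d → ℝ) → F) : tsupport (pdL l f) ⊆ tsupport f := by
  induction l with
  | nil => exact subset_rfl
  | cons j t ih => exact (tsupport_pd j (pdL t f)).trans ih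

theorem slice_hasCompactSupport {ρ : (Fin (n+1) → ℝ) → F} (hρ : HasCompactSupport ρ) (t : ℝ) :
    HasCompactSupport (fun y : Fin n → ℝ => ρ (Fin.cons t y)) := by
  apply HasCompactSupport.intro (K := (fun x : Fin (n+1) → ℝ => x ∘ Fin.succ) '' tsupport ρ)
  · exact hρ.image (continuous_pi fun j => continuous_apply _)
  · intro y hy
    by_contra hne
    apply hy
    refine ⟨Fin.cons t y, subset_tsupport _ hne, ?_⟩
    funext j; simp [Fin.cons_succ]
theorem line_hasCompactSupport {ρ : (Fin (n+1) → ℝ) → F} (hρ : HasCompactSupport ρ) (z : Fin n → ℝ) :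
    HasCompactSupport (fun τ : ℝ => ρ (Fin.cons τ z)) := by
  apply HasCompactSupport.intro (K := (fun x : Fin (n+1) → ℝ => x 0) '' tsupport ρ)
  · exact hρ.image (continuous_apply _)
  · intro τ hτ
    by_contra hne
    apply hτ
    exact ⟨Fin.cons τ z, subset_tsupport _ hne, by simp⟩

theorem pdL_slice {ρ : (Fin (n+1) → ℝ) → F} (hρ : ContDiff ℝ (⊤:ℕ∞) ρ) (t : ℝ)
    (l : List (Fin n)) :
    pdL l (fun y : Fin n → ℝ => ρ (Fin.cons t y))
      = fun y => pdL (l.map Fin.succ) ρ (Fin.cons t y) := by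
  induction l with
  | nil => rfl
  | cons j t' ih =>
    show pd j (pdL t' fun y => ρ (Fin.cons t y)) = _
    rw [ih]
    have := pd_slice (pdL_contDiff hρ (t'.map Fin.succ)) t j
    rw [this]
    rfl

set_option linter.unusedSectionVars false

set_option maxHeartbeats 1000000 in
theorem lint_pi_succ {n : ℕ} (g : (Fin (n+1) → ℝ) → ℝ≥0∞) (hg : Measurable g) :
    ∫⁻ w, g w = ∫⁻ τ : ℝ, ∫⁻ z : Fin n → ℝ, g (Fin.cons τ z) := by
  have mp := (measurePreserving_piFinSuccAbove (fun _ : Fin (n+1) => (volume : Measure ℝ)) 0).symm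
  rw [volume_pi, ← mp.lintegral_comp hg]
  simp_rw [MeasurableEquiv.piFinSuccAbove_symm_apply, Fin.insertNthEquiv, Equiv.coe_fn_mk,
    Fin.insertNth_zero]
  rw [lintegral_prod]
  · rfl
  · apply Measurable.aemeasurable
    apply hg.comp
    apply measurable_pi_iff.2
    intro j
    refine Fin.cases ?_ (fun k => ?_) j
    · simpa using measurable_fst
    · simpa [Function.comp_def] using (measurable_pi_apply k).comp measurable_snd

set_option maxHeartbeats 1000000 in
theorem lint_pi_succ' {n : ℕ} (g : (Fin (n+1) → ℝ) → ℝ≥0∞) (hg : Measurable g) :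
    ∫⁻ z : Fin n → ℝ, ∫⁻ τ : ℝ, g (Fin.cons τ z) = ∫⁻ w, g w := by
  have hc : Measurable (fun p : ℝ × (Fin n → ℝ) => g (Fin.cons p.1 p.2)) := by
    apply hg.comp
    apply measurable_pi_iff.2
    intro j
    refine Fin.cases ?_ (fun k => ?_) j
    · simpa using measurable_fst
    · simpa [Function.comp_def] using (measurable_pi_apply k).comp measurable_snd
  rw [lint_pi_succ g hg]
  apply lintegral_lintegral_swap
  apply Measurable.aemeasurable
  exact hc.comp (measurable_snd.prodMk measurable_fst)

set_option maxHeartbeats 1000000 in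
theorem multiftc : ∀ {d : ℕ} (ρ : (Fin d → ℝ) → ℂ), ContDiff ℝ (⊤:ℕ∞) ρ →
    HasCompactSupport ρ → ∀ x, (‖ρ x‖₊ : ℝ≥0∞) ≤ ∫⁻ z, ‖pdL (List.finRange d) ρ z‖₊ := by
  intro d
  induction d with
  | zero =>
    intro ρ _ _ x
    have h1 : pdL (List.finRange 0) ρ = ρ := rfl
    rw [h1]
    have hzz : ∀ z : Fin 0 → ℝ, ρ z = ρ x := fun z => by
      congr 1; exact Subsingleton.elim _ _
    have h2 : (volume : Measure (Fin 0 → ℝ)) Set.univ = 1 := by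
      rw [MeasureTheory.volume_pi, MeasureTheory.Measure.pi_univ]
      simp
    refine le_of_eq ?_
    calc (‖ρ x‖₊ : ℝ≥0∞) = (‖ρ x‖₊ : ℝ≥0∞) * 1 := (mul_one _).symm
      _ = ∫⁻ _z : Fin 0 → ℝ, ‖ρ x‖₊ := by rw [lintegral_const, h2]
      _ = ∫⁻ z : Fin 0 → ℝ, ‖ρ z‖₊ := by congr 1; funext z; rw [hzz z]
  | succ n ih =>
    intro ρ hsm hcs x
    set t := x 0 with ht
    set σ := (fun y : Fin n → ℝ => ρ (Fin.cons t y)) with hσ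
    set R := pdL ((List.finRange n).map Fin.succ) ρ with hR
    have hRsm : ContDiff ℝ (⊤:ℕ∞) R := pdL_contDiff hsm _
    have hRcs : HasCompactSupport R := hasCompactSupport_pdL hcs _
    have hfinal : pdL (List.finRange (n+1)) ρ = pd 0 R := by
      rw [List.finRange_succ]; rfl
    have hpd0Rc : Continuous (pd 0 R) := (pd_contDiff hRsm 0).continuous
    have hconscont : Continuous (fun p : ℝ × (Fin n → ℝ) => (Fin.cons p.1 p.2 : Fin (n+1) → ℝ)) := by
      apply continuous_pi
      intro j
      refine Fin.cases ?_ (fun k => ?_) j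
      · simpa using continuous_fst
      · simpa [Function.comp_def] using (continuous_apply k).comp continuous_snd
    have hGcont : Continuous (fun p : ℝ × (Fin n → ℝ) => pd 0 R (Fin.cons p.1 p.2)) :=
      hpd0Rc.comp hconscont
    have hGmeas : Measurable (fun p : ℝ × (Fin n → ℝ) => (‖pd 0 R (Fin.cons p.1 p.2)‖₊ : ℝ≥0∞)) :=
      hGcont.nnnorm.measurable.coe_nnreal_ennreal
    calc (‖ρ x‖₊ : ℝ≥0∞)
        = ‖σ (Fin.tail x)‖₊ := by
          rw [hσ]; simp only [← ht]; rw [Fin.cons_self_tail]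
      _ ≤ ∫⁻ z, ‖pdL (List.finRange n) σ z‖₊ :=
          ih σ (slice_contDiff hsm t) (slice_hasCompactSupport hcs t) (Fin.tail x)
      _ = ∫⁻ z, ‖R (Fin.cons t z)‖₊ := by
          rw [pdL_slice hsm t (List.finRange n)]
      _ ≤ ∫⁻ z, ∫⁻ τ, ‖pd 0 R (Fin.cons τ z)‖₊ := by
          apply lintegral_mono
          intro z
          apply ftc1 (g := fun τ => R (Fin.cons τ z)) (g' := fun τ => pd 0 R (Fin.cons τ z))
          · exact fun τ => hasDerivAt_line hRsm z τ
          · exact (hpd0Rc.comp hconscont).comp (continuous_id.prodMk continuous_const)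
          · exact line_hasCompactSupport hRcs z
      _ = ∫⁻ w, ‖pd 0 R w‖₊ :=
          lint_pi_succ' (fun w => (‖pd 0 R w‖₊ : ℝ≥0∞))
            (hpd0Rc.nnnorm.measurable.coe_nnreal_ennreal)
      _ = ∫⁻ w, ‖pdL (List.finRange (n+1)) ρ w‖₊ := by rw [hfinal]

theorem pdPow_contDiffOn {U : Set (Fin d → ℝ)} (hU : IsOpen U) {f : (Fin d → ℝ) → F}
    (hf : ContDiffOn ℝ (⊤:ℕ∞) f U) (i : Fin d) (n : ℕ) : ContDiffOn ℝ (⊤:ℕ∞) (pdPow i n f) U := by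
  induction n with
  | zero => exact hf
  | succ n ih => exact pd_contDiffOn hU ih i

theorem pdl_contDiffOn {U : Set (Fin d → ℝ)} (hU : IsOpen U) {f : (Fin d → ℝ) → F}
    (hf : ContDiffOn ℝ (⊤:ℕ∞) f U) (δ : Fin d → ℕ) (l : List (Fin d)) :
    ContDiffOn ℝ (⊤:ℕ∞) (pdl δ l f) U := by
  induction l with
  | nil => exact hf
  | cons j t ih => exact pdPow_contDiffOn hU ih j (δ j)

theorem pdm_contDiffOn {U : Set (Fin d → ℝ)} (hU : IsOpen U) {f : (Fin d → ℝ) → F}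
    (hf : ContDiffOn ℝ (⊤:ℕ∞) f U) (δ : Fin d → ℕ) : ContDiffOn ℝ (⊤:ℕ∞) (pdm δ f) U :=
  pdl_contDiffOn hU hf δ _

theorem pd_congr_sub {U : Set (Fin d → ℝ)} (hU : IsOpen U) {F1 f g : (Fin d → ℝ) → F}
    (hf : ContDiffOn ℝ (⊤:ℕ∞) f U) (hg : ContDiffOn ℝ (⊤:ℕ∞) g U)
    (hF1 : ∀ y ∈ U, F1 y = f y - g y) (i : Fin d) {x : Fin d → ℝ} (hx : x ∈ U) :
    pd i F1 x = pd i f x - pd i g x := by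
  have hev : F1 =ᶠ[nhds x] (f - g) :=
    Filter.eventually_of_mem (hU.mem_nhds hx) (fun y hy => by simp [hF1 y hy])
  have hfd : DifferentiableAt ℝ f x :=
    (hf.differentiableOn (by simp)).differentiableAt (hU.mem_nhds hx)
  have hgd : DifferentiableAt ℝ g x :=
    (hg.differentiableOn (by simp)).differentiableAt (hU.mem_nhds hx)
  have h1 : fderiv ℝ F1 x = fderiv ℝ (f - g) x := hev.fderiv_eq
  have h2 : fderiv ℝ (f - g) x = fderiv ℝ f x - fderiv ℝ g x := by
    have := fderiv_sub hfd hgd; simpa using this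
  simp [pd, h1, h2]

theorem pdPow_congr_sub {U : Set (Fin d → ℝ)} (hU : IsOpen U) {F1 f g : (Fin d → ℝ) → F}
    (hf : ContDiffOn ℝ (⊤:ℕ∞) f U) (hg : ContDiffOn ℝ (⊤:ℕ∞) g U)
    (hF1 : ∀ y ∈ U, F1 y = f y - g y) (i : Fin d) (n : ℕ) :
    ∀ x ∈ U, pdPow i n F1 x = pdPow i n f x - pdPow i n g x := by
  induction n with
  | zero => exact hF1
  | succ n ih =>
    intro x hx
    exact pd_congr_sub hU (pdPow_contDiffOn hU hf i n) (pdPow_contDiffOn hU hg i n) ih i hx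

theorem pdl_congr_sub {U : Set (Fin d → ℝ)} (hU : IsOpen U) {F1 f g : (Fin d → ℝ) → F}
    (hf : ContDiffOn ℝ (⊤:ℕ∞) f U) (hg : ContDiffOn ℝ (⊤:ℕ∞) g U)
    (hF1 : ∀ y ∈ U, F1 y = f y - g y) (δ : Fin d → ℕ) (l : List (Fin d)) :
    ∀ x ∈ U, pdl δ l F1 x = pdl δ l f x - pdl δ l g x := by
  induction l with
  | nil => exact hF1
  | cons j t ih =>
    intro x hx
    exact pdPow_congr_sub hU (pdl_contDiffOn hU hf δ t) (pdl_contDiffOn hU hg δ t) ih j (δ j) x hx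

theorem pdm_sub_on {U : Set (Fin d → ℝ)} (hU : IsOpen U) {f g : (Fin d → ℝ) → F}
    (hf : ContDiffOn ℝ (⊤:ℕ∞) f U) (hg : ContDiffOn ℝ (⊤:ℕ∞) g U) (δ : Fin d → ℕ) :
    ∀ x ∈ U, pdm δ (f - g) x = pdm δ f x - pdm δ g x :=
  pdl_congr_sub hU hf hg (fun y _ => rfl) δ _

theorem tsupport_pdPow (i : Fin d) (n : ℕ) (f : (Fin d → ℝ) → F) :
    tsupport (pdPow i n f) ⊆ tsupport f := by
  induction n with
  | zero => exact subset_rfl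
  | succ n ih => exact (tsupport_pd i (pdPow i n f)).trans ih

theorem tsupport_pdl (δ : Fin d → ℕ) (l : List (Fin d)) (f : (Fin d → ℝ) → F) :
    tsupport (pdl δ l f) ⊆ tsupport f := by
  induction l with
  | nil => exact subset_rfl
  | cons j t ih => exact (tsupport_pdPow j (δ j) (pdl δ t f)).trans ih

theorem tsupport_pdm (δ : Fin d → ℕ) (f : (Fin d → ℝ) → F) :
    tsupport (pdm δ f) ⊆ tsupport f := tsupport_pdl δ _ f

theorem hasCompactSupport_pdm {f : (Fin d → ℝ) → F} (hf : HasCompactSupport f) (δ : Fin d → ℕ) :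
    HasCompactSupport (pdm δ f) :=
  IsCompact.of_isClosed_subset hf isClosed_closure (tsupport_pdm δ f)

theorem tsupport_sub' (f g : (Fin d → ℝ) → F) :
    tsupport (f - g) ⊆ tsupport f ∪ tsupport g := by
  have h1 : Function.support (f - g) ⊆ tsupport f ∪ tsupport g := by
    intro x hx
    by_contra hmem
    rw [Set.mem_union] at hmem
    push_neg at hmem
    have hf0 : f x = 0 := image_eq_zero_of_notMem_tsupport hmem.1
    have hg0 : g x = 0 := image_eq_zero_of_notMem_tsupport hmem.2
    exact hx (by simp [hf0, hg0])
  exact closure_minimal h1 ((isClosed_closure).union isClosed_closure)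

theorem hasCompactSupport_sub' {f g : (Fin d → ℝ) → F} (hf : HasCompactSupport f)
    (hg : HasCompactSupport g) : HasCompactSupport (f - g) :=
  IsCompact.of_isClosed_subset (hf.union hg) isClosed_closure (tsupport_sub' f g)

theorem pdL_eq_pdl_one (l : List (Fin d)) (f : (Fin d → ℝ) → F) :
    pdL l f = pdl (fun _ => 1) l f := by
  induction l with
  | nil => rfl
  | cons j t ih =>
    show pd j (pdL t f) = pdPow j 1 (pdl (fun _ => 1) t f)
    rw [ih]
    rfl

/-- sup bound for compactly supported smooth functions -/
theorem test_sup_bound {U : Set (Fin d → ℝ)} {ψ : (Fin d → ℝ) → ℂ}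
    (hsm : ContDiff ℝ (⊤:ℕ∞) ψ) (hcs : HasCompactSupport ψ) (hsupp : tsupport ψ ⊆ U)
    (γ : Fin d → ℕ) (x : Fin d → ℝ) :
    (‖pdm γ ψ x‖₊ : ℝ≥0∞) ≤ eLpNorm (pdm (γ + fun _ => 1) ψ) 1 (volume.restrict U) := by
  have h1 := multiftc (pdm γ ψ) (pdm_contDiff hsm γ) (hasCompactSupport_pdm hcs γ) x
  have h2 : pdL (List.finRange d) (pdm γ ψ) = pdm (γ + fun _ => 1) ψ := by
    rw [pdL_eq_pdl_one]
    have : pdl (fun _ => 1) (List.finRange d) (pdm γ ψ) = pdm (fun _ => 1) (pdm γ ψ) := rfl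
    rw [this, pdm_one_pdm hsm]
  rw [h2] at h1
  refine h1.trans (le_of_eq ?_)
  rw [eLpNorm_one_eq_lintegral_enorm]
  refine (setLIntegral_eq_of_support_subset ?_).symm
  intro z hz
  simp only [Function.mem_support] at hz
  have hz' : pdm (γ + fun _ => 1) ψ z ≠ 0 := by
    intro h0
    apply hz
    rw [h0]
    simp
  exact hsupp (tsupport_pdm _ ψ (subset_tsupport _ hz'))

theorem term_le_seqLpNorm {ι : Type*} {q : ℝ≥0∞} (hq1 : 1 ≤ q) (w : ι → ℝ≥0∞) (i : ι) :
    w i ≤ seqLpNorm q w := by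
  unfold seqLpNorm
  by_cases hq : q = ∞
  · simp only [hq, if_true]
    exact le_iSup w i
  · simp only [hq, if_false]
    have hq0 : q ≠ 0 := by rintro rfl; simp at hq1
    have hr : 0 < q.toReal := ENNReal.toReal_pos hq0 hq
    calc w i = (w i ^ q.toReal) ^ (1 / q.toReal) := by
          rw [← ENNReal.rpow_mul, mul_one_div_cancel hr.ne', ENNReal.rpow_one]
      _ ≤ (∑' j, w j ^ q.toReal) ^ (1 / q.toReal) :=
          ENNReal.rpow_le_rpow (ENNReal.le_tsum i) (by positivity)

theorem pi_decomp (v : Fin d → ℝ) : ∑ i, v i • (Pi.single i 1 : Fin d → ℝ) = v := by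
  funext j
  rw [Finset.sum_apply]
  rw [Finset.sum_eq_single j]
  · simp
  · intro i _ hij; simp [Pi.single_apply, hij]
  · intro hj; exact absurd (Finset.mem_univ j) hj

theorem lip_test {ψ : (Fin d → ℝ) → ℂ} (hsm : ContDiff ℝ (⊤:ℕ∞) ψ) (α : Fin d → ℕ)
    {K : Fin d → ℝ} (hK : ∀ i z, ‖pdm (α + Pi.single i 1) ψ z‖ ≤ K i) (x y : Fin d → ℝ) :
    ‖pdm α ψ x - pdm α ψ y‖ ≤ (∑ i, K i) * ‖x - y‖ := by
  have hg : ContDiff ℝ (⊤:ℕ∞) (pdm α ψ) := pdm_contDiff hsm α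
  have hKnn : ∀ i, 0 ≤ K i := fun i => le_trans (norm_nonneg _) (hK i x)
  have hbound : ∀ z, ‖fderiv ℝ (pdm α ψ) z‖ ≤ ∑ i, K i := by
    intro z
    apply ContinuousLinearMap.opNorm_le_bound _ (Finset.sum_nonneg fun i _ => hKnn i)
    intro v
    set L := fderiv ℝ (pdm α ψ) z with hL
    have hv : L v = ∑ i, v i • L (Pi.single i 1) := by
      conv_lhs => rw [← pi_decomp v]
      rw [map_sum]
      congr 1; funext i; rw [L.map_smul]
    calc ‖L v‖ = ‖∑ i, v i • L (Pi.single i 1)‖ := by rw [hv]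
      _ ≤ ∑ i, ‖v i • L (Pi.single i 1)‖ := norm_sum_le _ _
      _ = ∑ i, |v i| * ‖pdm (α + Pi.single i 1) ψ z‖ := by
          congr 1; funext i
          rw [norm_smul, Real.norm_eq_abs]
          congr 2
          rw [pd_pdm hsm α i]
          rfl
      _ ≤ ∑ i, ‖v‖ * K i := by
          apply Finset.sum_le_sum
          intro i _
          exact mul_le_mul (by simpa using norm_le_pi_norm v i) (hK i z) (norm_nonneg _)
            (norm_nonneg _)
      _ = (∑ i, K i) * ‖v‖ := by rw [← Finset.mul_sum, mul_comm]
  have := (convex_univ (𝕜 := ℝ) (E := Fin d → ℝ)).norm_image_sub_le_of_norm_fderiv_le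
    (f := pdm α ψ) (fun z _ => (hg.differentiable (by simp)).differentiableAt)
    (fun z _ => hbound z) (Set.mem_univ y) (Set.mem_univ x)
  simpa using this

theorem le_toReal_of_nnnorm {v : ℂ} {W : ℝ≥0∞} (h : (‖v‖₊ : ℝ≥0∞) ≤ W) (hW : W ≠ ⊤) :
    ‖v‖ ≤ W.toReal := by
  have := ENNReal.toReal_mono hW h
  simpa using this

theorem eq_on_of_ae_eq {U : Set (Fin d → ℝ)} (hU : IsOpen U) {f g : (Fin d → ℝ) → ℂ}
    (hae : f =ᵐ[volume.restrict U] g) (hf : Continuous f) (hg : ContinuousOn g U) :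
    ∀ x ∈ U, f x = g x := by
  intro x hx
  by_contra hne
  set r := ‖f x - g x‖ with hr
  have hrpos : 0 < r := by
    rw [hr]
    simpa [sub_eq_zero] using hne
  have hca : ContinuousAt (fun z => ‖f z - g z‖) x :=
    (((hf.continuousOn).sub hg).norm).continuousAt (hU.mem_nhds hx)
  have hev : ∀ᶠ z in nhds x, r / 2 < ‖f z - g z‖ :=
    hca.eventually (eventually_gt_nhds (by linarith))
  have hevU : ∀ᶠ z in nhds x, z ∈ U := hU.mem_nhds hx
  obtain ⟨T, hTsub, hTopen, hxT⟩ := mem_nhds_iff.1 (hev.and hevU)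
  have hTU : T ⊆ U := fun z hz => (hTsub hz).2
  have hT0 : 0 < volume T := hTopen.measure_pos volume ⟨x, hxT⟩
  have hnull : (volume.restrict U) {z | ¬ f z = g z} = 0 := ae_iff.1 hae
  have hTsub2 : T ⊆ {z | ¬ f z = g z} := by
    intro z hz
    have h2 := (hTsub hz).1
    intro heq
    rw [heq] at h2
    simp at h2
    linarith
  have hle : (volume.restrict U) T ≤ 0 := hnull ▸ measure_mono hTsub2
  rw [Measure.restrict_apply hTopen.measurableSet, Set.inter_eq_self_of_subset_left hTU] at hle
  exact absurd (le_antisymm hle zero_le) hT0.ne'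


end Aux

/-- Fix `s > 1`, a bounded open set `U ⊆ ℝ^d`, `h > 0`, `α ∈ ℕ^d` and
`1 ≤ p ≤ ∞` with conjugate exponent `q`. The set `G_α = {D^α δ_x : x ∈ U}` of the
continuous linear functionals `φ ↦ (-1)^{|α|} D^α φ(x)` on `D^{(s)}_{L^q,h}(U)` is
precompact (totally bounded) in the dual Banach space `D'^{(s)}_{L^p,h}(U)` with its
operator norm. -/
theorem statement_16 {d : ℕ} (s h : ℝ) (hs : 1 < s) (hh : 0 < h)
    (U : Set (Fin d → ℝ)) (hU : IsOpen U) (hUb : Bornology.IsBounded U)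
    (p q : ℝ≥0∞) (hp : 1 ≤ p) (hpq : 1 / p + 1 / q = 1)
    (α : Fin d → ℕ) :
    ∀ ε : ℝ, 0 < ε → ∃ Y : Set (Fin d → ℝ), Y.Finite ∧ Y ⊆ U ∧
      ∀ x ∈ U, ∃ y ∈ Y, ∀ φ : (Fin d → ℝ) → ℂ,
        MemD s h q U φ → gNorm s h q U φ ≤ 1 →
        ‖(-1 : ℂ) ^ mOrder α * Dm α φ x - (-1 : ℂ) ^ mOrder α * Dm α φ y‖ ≤ ε := by
  intro ε hε
  classical
  have hq1 : (1:ℝ≥0∞) ≤ q := by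
    have h1 : 1 / q ≤ 1 := by
      conv_rhs => rw [← hpq]
      exact le_add_self
    rwa [one_div, ENNReal.inv_le_one] at h1
  have hq0 : q ≠ 0 := by
    intro h0
    rw [h0] at hq1
    simp at hq1
  set μ : Measure (Fin d → ℝ) := volume.restrict U with hμdef
  have hμuniv : μ Set.univ ≠ ⊤ := by
    rw [hμdef, Measure.restrict_apply_univ]
    exact hUb.measure_lt_top.ne
  have hqinv : 0 ≤ 1 / (1:ℝ≥0∞).toReal - 1 / q.toReal := by
    rcases eq_or_ne q ∞ with hq | hq
    · simp [hq]
    · have h2 : 1 ≤ q.toReal := by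
        have := ENNReal.toReal_mono hq hq1
        simpa using this
      have h3 : 1 / q.toReal ≤ 1 := by
        rw [div_le_one (by linarith)]
        linarith
      simp only [ENNReal.toReal_one]
      linarith
  set V : ℝ≥0∞ := μ Set.univ ^ (1 / (1:ℝ≥0∞).toReal - 1 / q.toReal) with hV
  have hVfin : V ≠ ⊤ := ENNReal.rpow_ne_top_of_nonneg hqinv hμuniv
  set c : (Fin d → ℕ) → ℝ≥0∞ := fun γ =>
    ENNReal.ofReal (h ^ mOrder γ / (mFact γ : ℝ) ^ s) with hcdef
  have hcpos : ∀ γ, 0 < c γ := by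
    intro γ
    apply ENNReal.ofReal_pos.2
    apply div_pos (pow_pos hh _)
    apply Real.rpow_pos_of_pos
    have : 0 < mFact γ := Finset.prod_pos fun i _ => Nat.factorial_pos _
    exact_mod_cast this
  have hcfin : ∀ γ, c γ ≠ ⊤ := fun γ => ENNReal.ofReal_ne_top
  have hcifin : ∀ γ, (c γ)⁻¹ ≠ ⊤ := fun γ => ENNReal.inv_ne_top.2 (hcpos γ).ne'
  have hterm : ∀ (γ : Fin d → ℕ) (f : (Fin d → ℝ) → ℂ) (B : ℝ≥0∞),
      gNorm s h q U f ≤ B → eLpNorm (pdm γ f) q μ ≤ (c γ)⁻¹ * B := by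
    intro γ f B hB
    have hgdef : gNorm s h q U f = seqLpNorm q (fun γ => c γ * eLpNorm (pdm γ f) q μ) := rfl
    rw [hgdef] at hB
    have h1 : c γ * eLpNorm (pdm γ f) q μ ≤ B :=
      le_trans (term_le_seqLpNorm hq1 _ γ) hB
    calc eLpNorm (pdm γ f) q μ
        = (c γ)⁻¹ * (c γ * eLpNorm (pdm γ f) q μ) := by
          rw [← mul_assoc, ENNReal.inv_mul_cancel (hcpos γ).ne' (hcfin γ), one_mul]
      _ ≤ (c γ)⁻¹ * B := mul_le_mul_right h1 _
  have hsup : ∀ (θ : (Fin d → ℝ) → ℂ), ContDiff ℝ (⊤:ℕ∞) θ → HasCompactSupport θ →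
      tsupport θ ⊆ U → ∀ (β : Fin d → ℕ) (z : Fin d → ℝ),
      (‖pdm β θ z‖₊ : ℝ≥0∞) ≤ eLpNorm (pdm (β + fun _ => 1) θ) q μ * V := by
    intro θ h1 h2 h3 β z
    refine (test_sup_bound h1 h2 h3 β z).trans ?_
    exact eLpNorm_le_eLpNorm_mul_rpow_measure_univ hq1
      ((pdm_contDiff h1 _).continuous.aestronglyMeasurable)
  set KK : Fin d → ℝ := fun i =>
    (2 * (c ((α + Pi.single i 1) + fun _ => 1))⁻¹ * V).toReal with hKK
  set K : ℝ := ∑ i, KK i with hKdef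
  have hKnn : 0 ≤ K := Finset.sum_nonneg fun i _ => ENNReal.toReal_nonneg
  have key : ∀ (φ : (Fin d → ℝ) → ℂ), MemD s h q U φ → gNorm s h q U φ ≤ 1 →
      ∀ x ∈ U, ∀ y ∈ U, ‖pdm α φ x - pdm α φ y‖ ≤ K * ‖x - y‖ := by
    intro φ hmem hφ1 x hx y hy
    obtain ⟨hφsm, hφfin, happrox⟩ := hmem
    have happ : ∀ n : ℕ, ∃ ψ, IsGevreyTest s U ψ ∧
        gNorm s h q U (φ - ψ) < ENNReal.ofReal (1 / (n+1)) := fun n =>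
      happrox (1/(n+1)) (by positivity)
    choose ψ hψt hψs using happ
    have hψsm : ∀ n, ContDiff ℝ (⊤:ℕ∞) (ψ n) := fun n => (hψt n).1
    have hψcs : ∀ n, HasCompactSupport (ψ n) := fun n => (hψt n).2.1
    have hψsupp : ∀ n, tsupport (ψ n) ⊆ U := fun n => (hψt n).2.2.1
    have hEφ : ∀ γ, eLpNorm (pdm γ φ) q μ ≤ (c γ)⁻¹ := by
      intro γ
      simpa using hterm γ φ 1 hφ1
    have hEd : ∀ γ n, eLpNorm (pdm γ (φ - ψ n)) q μ ≤ (c γ)⁻¹ * ENNReal.ofReal (1/(n+1)) :=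
      fun γ n => hterm γ _ _ (hψs n).le
    have hasmφ : ∀ γ, AEStronglyMeasurable (pdm γ φ) μ := fun γ =>
      ((pdm_contDiffOn hU hφsm γ).continuousOn).aestronglyMeasurable hU.measurableSet
    have hφψsm : ∀ n, ContDiffOn ℝ (⊤:ℕ∞) (φ - ψ n) U := fun n =>
      hφsm.sub ((hψsm n).contDiffOn)
    have hasmd : ∀ γ n, AEStronglyMeasurable (pdm γ (φ - ψ n)) μ := fun γ n =>
      ((pdm_contDiffOn hU (hφψsm n) γ).continuousOn).aestronglyMeasurable hU.measurableSet
    have hEψ : ∀ γ n, eLpNorm (pdm γ (ψ n)) q μ ≤ 2 * (c γ)⁻¹ := by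
      intro γ n
      have hae : pdm γ (ψ n) =ᵐ[μ] (fun z => pdm γ φ z - pdm γ (φ - ψ n) z) := by
        rw [hμdef]
        refine (ae_restrict_iff' hU.measurableSet).2 (Filter.Eventually.of_forall fun z hz => ?_)
        have h1 := pdm_sub_on hU hφsm (hφψsm n) γ z hz
        have h2 : φ - (φ - ψ n) = ψ n := by funext w; simp
        rw [h2] at h1
        exact h1
      calc eLpNorm (pdm γ (ψ n)) q μ
          = eLpNorm (fun z => pdm γ φ z - pdm γ (φ - ψ n) z) q μ := eLpNorm_congr_ae hae
        _ ≤ eLpNorm (pdm γ φ) q μ + eLpNorm (pdm γ (φ - ψ n)) q μ :=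
            eLpNorm_sub_le (hasmφ γ) (hasmd γ n) hq1
        _ ≤ (c γ)⁻¹ + (c γ)⁻¹ * ENNReal.ofReal (1/(n+1)) := add_le_add (hEφ γ) (hEd γ n)
        _ ≤ (c γ)⁻¹ + (c γ)⁻¹ * 1 := by
            refine add_le_add le_rfl (mul_le_mul_right ?_ _)
            refine ENNReal.ofReal_le_one.2 ?_
            rw [div_le_one (by positivity)]
            norm_num
        _ = 2 * (c γ)⁻¹ := by ring
    have hKbound : ∀ n i z, ‖pdm (α + Pi.single i 1) (ψ n) z‖ ≤ KK i := by
      intro n i z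
      refine le_toReal_of_nnnorm ?_ (ENNReal.mul_ne_top
        (ENNReal.mul_ne_top ENNReal.ofNat_ne_top (hcifin _)) hVfin)
      calc (‖pdm (α + Pi.single i 1) (ψ n) z‖₊ : ℝ≥0∞)
          ≤ eLpNorm (pdm ((α + Pi.single i 1) + fun _ => 1) (ψ n)) q μ * V :=
            hsup (ψ n) (hψsm n) (hψcs n) (hψsupp n) _ z
        _ ≤ 2 * (c ((α + Pi.single i 1) + fun _ => 1))⁻¹ * V :=
            mul_le_mul_left (hEψ _ n) V
    have hlip : ∀ n x' y', ‖pdm α (ψ n) x' - pdm α (ψ n) y'‖ ≤ K * ‖x' - y'‖ := fun n =>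
      lip_test (hψsm n) α (hKbound n)
    set A : ℝ := ((c (α + fun _ => 1))⁻¹ * V).toReal with hA
    have hAnn : 0 ≤ A := ENNReal.toReal_nonneg
    have hdiff : ∀ n m z, ‖pdm α (ψ n) z - pdm α (ψ m) z‖ ≤ A * (1/(n+1) + 1/(m+1)) := by
      intro n m z
      set θ : (Fin d → ℝ) → ℂ := ψ n - ψ m with hθ
      have hθsm : ContDiff ℝ (⊤:ℕ∞) θ := (hψsm n).sub (hψsm m)
      have hθcs : HasCompactSupport θ := hasCompactSupport_sub' (hψcs n) (hψcs m)
      have hθsupp : tsupport θ ⊆ U :=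
        (tsupport_sub' _ _).trans (Set.union_subset (hψsupp n) (hψsupp m))
      have hθeq : pdm α θ z = pdm α (ψ n) z - pdm α (ψ m) z :=
        pdm_sub_on isOpen_univ ((hψsm n).contDiffOn) ((hψsm m).contDiffOn) α z (Set.mem_univ z)
      have hEθ : eLpNorm (pdm (α + fun _ => 1) θ) q μ ≤
          (c (α + fun _ => 1))⁻¹ * ENNReal.ofReal (1/(n+1) + 1/(m+1)) := by
        have hae : pdm (α + fun _ => 1) θ =ᵐ[μ]
            (fun w => pdm (α + fun _ => 1) (φ - ψ m) w - pdm (α + fun _ => 1) (φ - ψ n) w) := by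
          rw [hμdef]
          refine (ae_restrict_iff' hU.measurableSet).2 (Filter.Eventually.of_forall fun w hw => ?_)
          have h1 := pdm_sub_on hU (hφψsm m) (hφψsm n) (α + fun _ => 1) w hw
          have h2 : (φ - ψ m) - (φ - ψ n) = θ := by
            funext u
            simp only [Pi.sub_apply, hθ]
            ring
          rw [h2] at h1
          exact h1
        calc eLpNorm (pdm (α + fun _ => 1) θ) q μ
            = eLpNorm (fun w => pdm (α + fun _ => 1) (φ - ψ m) w
                - pdm (α + fun _ => 1) (φ - ψ n) w) q μ := eLpNorm_congr_ae hae
          _ ≤ eLpNorm (pdm (α + fun _ => 1) (φ - ψ m)) q μ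
                + eLpNorm (pdm (α + fun _ => 1) (φ - ψ n)) q μ :=
              eLpNorm_sub_le (hasmd _ m) (hasmd _ n) hq1
          _ ≤ (c (α + fun _ => 1))⁻¹ * ENNReal.ofReal (1/(m+1))
                + (c (α + fun _ => 1))⁻¹ * ENNReal.ofReal (1/(n+1)) :=
              add_le_add (hEd _ m) (hEd _ n)
          _ = (c (α + fun _ => 1))⁻¹ * ENNReal.ofReal (1/(n+1) + 1/(m+1)) := by
              rw [← mul_add, ← ENNReal.ofReal_add (by positivity) (by positivity)]
              ring_nf
      have hsupθ := hsup θ hθsm hθcs hθsupp α z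
      rw [hθeq] at hsupθ
      have hfin2 : (c (α + fun _ => 1))⁻¹ * ENNReal.ofReal (1/(n+1) + 1/(m+1)) * V ≠ ⊤ :=
        ENNReal.mul_ne_top (ENNReal.mul_ne_top (hcifin _) ENNReal.ofReal_ne_top) hVfin
      have hfinal := le_toReal_of_nnnorm (hsupθ.trans (mul_le_mul_left hEθ V)) hfin2
      refine hfinal.trans (le_of_eq ?_)
      rw [ENNReal.toReal_mul, ENNReal.toReal_mul, ENNReal.toReal_ofReal (by positivity),
        hA, ENNReal.toReal_mul]
      ring
    have hdist : ∀ z n m N, N ≤ n → N ≤ m →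
        dist (pdm α (ψ n) z) (pdm α (ψ m) z) ≤ (A*2) * (1/(N+1)) := by
      intro z n m N hn hm
      rw [dist_eq_norm]
      refine (hdiff n m z).trans ?_
      have h1 : (1:ℝ)/(n+1) ≤ 1/(N+1) := by
        apply one_div_le_one_div_of_le (by positivity)
        have := (Nat.cast_le (α := ℝ)).2 hn
        linarith
      have h2 : (1:ℝ)/(m+1) ≤ 1/(N+1) := by
        apply one_div_le_one_div_of_le (by positivity)
        have := (Nat.cast_le (α := ℝ)).2 hm
        linarith
      nlinarith
    have hb0 : Filter.Tendsto (fun N : ℕ => (A*2) * (1/(N+1) : ℝ)) Filter.atTop (nhds 0) := by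
      simpa using tendsto_one_div_add_atTop_nhds_zero_nat.const_mul (A*2)
    have hcau : ∀ z, CauchySeq (fun n => pdm α (ψ n) z) := fun z =>
      cauchySeq_of_le_tendsto_0 _ (fun n m N hn hm => hdist z n m N hn hm) hb0
    set g : (Fin d → ℝ) → ℂ := fun z => limUnder Filter.atTop (fun n => pdm α (ψ n) z) with hg
    have htend : ∀ z, Filter.Tendsto (fun n => pdm α (ψ n) z) Filter.atTop (nhds (g z)) :=
      fun z => (hcau z).tendsto_limUnder
    have htendA : Filter.Tendsto (fun n : ℕ => (A * (1/(n+1)) : ℝ)) Filter.atTop (nhds 0) := by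
      simpa using tendsto_one_div_add_atTop_nhds_zero_nat.const_mul A
    have hgu : ∀ z n, dist (g z) (pdm α (ψ n) z) ≤ A * (1/(n+1)) := by
      intro z n
      have h1 : Filter.Tendsto (fun m => dist (pdm α (ψ m) z) (pdm α (ψ n) z)) Filter.atTop
          (nhds (dist (g z) (pdm α (ψ n) z))) := (htend z).dist tendsto_const_nhds
      have h2 : Filter.Tendsto (fun m : ℕ => A * (1/(m+1)) + A * (1/(n+1))) Filter.atTop
          (nhds (A * (1/(n+1)))) := by
        simpa using htendA.add_const (A * (1/(n+1)))
      refine le_of_tendsto_of_tendsto h1 h2 (Filter.Eventually.of_forall fun m => ?_)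
      show dist (pdm α (ψ m) z) (pdm α (ψ n) z) ≤ A * (1/(m+1)) + A * (1/(n+1))
      rw [dist_eq_norm]
      refine (hdiff m n z).trans (le_of_eq ?_)
      ring
    have hgcont : Continuous g := by
      have huni : TendstoUniformly (fun n z => pdm α (ψ n) z) g Filter.atTop := by
        rw [Metric.tendstoUniformly_iff]
        intro ε' hε'
        filter_upwards [htendA.eventually (eventually_lt_nhds hε')] with n hn z
        exact lt_of_le_of_lt (hgu z n) hn
      exact huni.continuous
        (Filter.Frequently.of_forall fun n => (pdm_contDiff (hψsm n) α).continuous)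
    set W : ℝ≥0∞ := μ Set.univ ^ q.toReal⁻¹ with hW
    have hWfin : W ≠ ⊤ := ENNReal.rpow_ne_top_of_nonneg (by positivity) hμuniv
    have hbound : ∀ n : ℕ, eLpNorm (fun z => g z - pdm α φ z) q μ ≤
        W * ENNReal.ofReal (A * (1/(n+1))) + (c α)⁻¹ * ENNReal.ofReal (1/(n+1)) := by
      intro n
      have hsplit : (fun z => g z - pdm α φ z)
          = (fun z => (g z - pdm α (ψ n) z) + (pdm α (ψ n) z - pdm α φ z)) := by
        funext z
        ring
      rw [hsplit]
      refine le_trans (eLpNorm_add_le ?_ ?_ hq1) (add_le_add ?_ ?_)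
      · exact (hgcont.sub (pdm_contDiff (hψsm n) α).continuous).aestronglyMeasurable
      · exact ((pdm_contDiff (hψsm n) α).continuous.aestronglyMeasurable.sub (hasmφ α))
      · refine le_trans (eLpNorm_le_of_ae_bound (C := A * (1/(n+1)))
          (Filter.Eventually.of_forall fun z => ?_)) ?_
        · rw [← dist_eq_norm]
          exact hgu z n
        · exact le_rfl
      · have hae2 : (fun z => pdm α (ψ n) z - pdm α φ z)
            =ᵐ[μ] (fun z => - pdm α (φ - ψ n) z) := by
          rw [hμdef]
          refine (ae_restrict_iff' hU.measurableSet).2 (Filter.Eventually.of_forall fun w hw => ?_)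
          have h1 := pdm_sub_on hU hφsm ((hψsm n).contDiffOn) α w hw
          show pdm α (ψ n) w - pdm α φ w = - pdm α (φ - ψ n) w
          rw [h1]
          ring
        rw [eLpNorm_congr_ae hae2,
          show (fun z => - pdm α (φ - ψ n) z) = -(pdm α (φ - ψ n)) from rfl, eLpNorm_neg]
        exact hEd α n
    have hzero : eLpNorm (fun z => g z - pdm α φ z) q μ = 0 := by
      refine le_antisymm ?_ zero_le
      have htend0 : Filter.Tendsto (fun n : ℕ => W * ENNReal.ofReal (A * (1/(n+1)))
          + (c α)⁻¹ * ENNReal.ofReal (1/(n+1))) Filter.atTop (nhds 0) := by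
        have h2 := ENNReal.tendsto_ofReal htendA
        have h3 := ENNReal.tendsto_ofReal (tendsto_one_div_add_atTop_nhds_zero_nat)
        have h4 := ENNReal.Tendsto.const_mul h2 (Or.inr hWfin)
        have h5 := ENNReal.Tendsto.const_mul h3 (Or.inr (hcifin α))
        simpa using h4.add h5
      exact ge_of_tendsto htend0 (Filter.Eventually.of_forall hbound)
    have haeeq : (fun z => g z - pdm α φ z) =ᵐ[μ] 0 :=
      (eLpNorm_eq_zero_iff (hgcont.aestronglyMeasurable.sub (hasmφ α)) hq0).1 hzero
    have hgeq : ∀ z ∈ U, g z = pdm α φ z := by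
      apply eq_on_of_ae_eq hU ?_ hgcont ((pdm_contDiffOn hU hφsm α).continuousOn)
      filter_upwards [haeeq] with z hz
      have h1 : g z - pdm α φ z = 0 := hz
      exact sub_eq_zero.1 h1
    have hfinal : ∀ n : ℕ, ‖pdm α φ x - pdm α φ y‖
        ≤ K * ‖x - y‖ + (A * (1/(n+1)) + A * (1/(n+1))) := by
      intro n
      rw [← hgeq x hx, ← hgeq y hy]
      calc ‖g x - g y‖
          ≤ ‖g x - pdm α (ψ n) x‖ + ‖pdm α (ψ n) x - pdm α (ψ n) y‖
            + ‖pdm α (ψ n) y - g y‖ := by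
            have h1 : g x - g y = (g x - pdm α (ψ n) x) + (pdm α (ψ n) x - pdm α (ψ n) y)
                + (pdm α (ψ n) y - g y) := by ring
            rw [h1]
            exact (norm_add_le _ _).trans (add_le_add (norm_add_le _ _) le_rfl)
        _ ≤ A * (1/(n+1)) + K * ‖x - y‖ + A * (1/(n+1)) := by
            refine add_le_add (add_le_add ?_ (hlip n x y)) ?_
            · rw [← dist_eq_norm]
              exact hgu x n
            · rw [← dist_eq_norm, dist_comm]
              exact hgu y n
        _ = K * ‖x - y‖ + (A * (1/(n+1)) + A * (1/(n+1))) := by ring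
    have hlim : Filter.Tendsto (fun n : ℕ => K * ‖x - y‖ + (A * (1/(n+1)) + A * (1/(n+1))))
        Filter.atTop (nhds (K * ‖x - y‖)) := by
      simpa using ((htendA.add htendA).const_add (K * ‖x - y‖))
    exact ge_of_tendsto hlim (Filter.Eventually.of_forall hfinal)
  set δ : ℝ := ε / (K + 1) with hδdef
  have hδpos : 0 < δ := div_pos hε (by linarith)
  have htb : TotallyBounded U :=
    (hUb.isCompact_closure).totallyBounded.subset subset_closure
  obtain ⟨Y, hYU, hYfin, hcover⟩ :=
    totallyBounded_iff_subset.1 htb _ (Metric.dist_mem_uniformity hδpos)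
  refine ⟨Y, hYfin, hYU, ?_⟩
  intro x hx
  have hx2 := hcover hx
  simp only [Set.mem_iUnion, Set.mem_setOf_eq] at hx2
  obtain ⟨y, hyY, hxy⟩ := hx2
  refine ⟨y, hyY, ?_⟩
  intro φ hmem hφ1
  have hyU : y ∈ U := hYU hyY
  have hkey := key φ hmem hφ1 x hx y hyU
  have hnorm : ‖(-1 : ℂ) ^ mOrder α * Dm α φ x - (-1 : ℂ) ^ mOrder α * Dm α φ y‖
      = ‖pdm α φ x - pdm α φ y‖ := by
    have h1 : (-1 : ℂ) ^ mOrder α * Dm α φ x - (-1 : ℂ) ^ mOrder α * Dm α φ y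
        = ((-1 : ℂ) ^ mOrder α * (-Complex.I) ^ mOrder α) * (pdm α φ x - pdm α φ y) := by
      simp only [Dm]
      ring
    rw [h1, norm_mul, norm_mul, norm_pow, norm_pow, norm_neg, norm_neg, norm_one,
      Complex.norm_I]
    simp
  rw [hnorm]
  have hxynorm : ‖x - y‖ = dist x y := (dist_eq_norm x y).symm
  calc ‖pdm α φ x - pdm α φ y‖ ≤ K * ‖x - y‖ := hkey
    _ ≤ K * δ := by
        refine mul_le_mul_of_nonneg_left ?_ hKnn
        rw [hxynorm]
        exact hxy.le
    _ ≤ (K + 1) * δ := by nlinarith [hδpos.le]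
    _ = ε := by
        rw [hδdef]
        field_simp
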